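/- If f : X^n → X preserves T_1 (i.e., composing f with any n binary almost unary functions yields a binary almost unary function), then any two f-wild subsets of {1,...,n} intersect. -/
import Mathlib


open Cardinal

/-- `A` is `(f,a)`-wild. -/
def WildFor {X : Type*} {n : ℕ} (f : (Fin n → X) → X) (A : Set (Fin n)) (a : Fin n → X) : Prop :=
  #{y : X | ∃ x : Fin n → X, (∀ i, i ∉ A → x i = a i) ∧ f x = y} = #X

/-- `A` is `f`-wild: `(f,a)`-wild for some `a`. -/
def Wild {X : Type*} {n : ℕ} (f : (Fin n → X) → X) (A : Set (Fin n)) : Prop :=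
  ∃ a : Fin n → X, WildFor f A a
/-- `f` is almost unary: bounded by a unary function of one fixed coordinate. -/
def AlmostUnary {X : Type*} [LT X] {n : ℕ} (f : (Fin n → X) → X) : Prop :=
  ∃ k : Fin n, ∃ F : X → X, ∀ x : Fin n → X, f x < F (x k)

/-- If `f` preserves `T₁` then any two `f`-wild subsets of `{1,...,n}` intersect. -/
theorem wild_intersect_of_preserves_T1 {X : Type*} [LinearOrder X] [WellFoundedLT X]
    (hreg : (#X).IsRegular) (hbdd : ∀ s : Set X, BddAbove s ↔ #s < #X)
    {n : ℕ} (f : (Fin n → X) → X)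
    (hpol : ∀ g : Fin n → ((Fin 2 → X) → X), (∀ i, AlmostUnary (g i)) →
      AlmostUnary (fun x : Fin 2 → X => f (fun i => g i x))) :
    ∀ A B : Set (Fin n), Wild f A → Wild f B → (A ∩ B).Nonempty := by
  classical
  intro A B hWA hWB
  obtain ⟨a, hA⟩ := hWA
  obtain ⟨b, hB⟩ := hWB
  by_contra hdisj
  rw [Set.not_nonempty_iff_eq_empty] at hdisj
  have hAB : ∀ i, i ∈ A → i ∈ B → False := fun i ha hb =>
    (Set.eq_empty_iff_forall_notMem.mp hdisj i) ⟨ha, hb⟩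
  -- X is nonempty
  have h0 : (0:Cardinal) < #X := lt_of_lt_of_le aleph0_pos hreg.aleph0_le
  have hne : Nonempty X := by
    rw [← Cardinal.mk_ne_zero_iff]
    exact ne_of_gt h0
  -- every element has a strictly larger element
  have habove : ∀ c : X, ∃ y : X, c < y := by
    have hnb : ¬ BddAbove (Set.univ : Set X) := by
      rw [hbdd]
      simp
    intro c
    obtain ⟨y, _, hy⟩ := not_bddAbove_iff.mp hnb c
    exact ⟨y, hy⟩
  choose ab hab using habove
  -- unbounded witnesses for A
  have hwA : ∀ c : X, ∃ x : Fin n → X, (∀ i, i ∉ A → x i = a i) ∧ c < f x := by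
    intro c
    have hnb : ¬ BddAbove {y : X | ∃ x : Fin n → X, (∀ i, i ∉ A → x i = a i) ∧ f x = y} := by
      rw [hbdd]
      intro hlt
      exact absurd hA (ne_of_lt hlt)
    obtain ⟨y, ⟨x, hx, hfx⟩, hy⟩ := not_bddAbove_iff.mp hnb c
    exact ⟨x, hx, hfx ▸ hy⟩
  choose wA hwA1 hwA2 using hwA
  have hwB : ∀ c : X, ∃ x : Fin n → X, (∀ i, i ∉ B → x i = b i) ∧ c < f x := by
    intro c
    have hnb : ¬ BddAbove {y : X | ∃ x : Fin n → X, (∀ i, i ∉ B → x i = b i) ∧ f x = y} := by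
      rw [hbdd]
      intro hlt
      exact absurd hB (ne_of_lt hlt)
    obtain ⟨y, ⟨x, hx, hfx⟩, hy⟩ := not_bddAbove_iff.mp hnb c
    exact ⟨x, hx, hfx ▸ hy⟩
  choose wB hwB1 hwB2 using hwB
  obtain ⟨p⟩ := hne
  set q : X := ab p with hq
  have hpq : p ≠ q := ne_of_lt (hab p)
  -- the binary functions
  set g : Fin n → (Fin 2 → X) → X := fun i x =>
    if i ∈ A then (if x 1 = p ∧ x 0 ≠ q then wA (x 0) i else b i)
    else if i ∈ B then (if x 0 = q then wB (x 1) i else a i)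
    else (if x 0 = q then b i else a i) with hg
  have hgu : ∀ i, AlmostUnary (g i) := by
    intro i
    by_cases hiA : i ∈ A
    · refine ⟨0, fun u => ab (max (wA u i) (b i)), fun x => ?_⟩
      have h1 : g i x ≤ max (wA (x 0) i) (b i) := by
        simp only [hg]
        rw [if_pos hiA]
        split
        · exact le_max_left _ _
        · exact le_max_right _ _
      exact lt_of_le_of_lt h1 (hab _)
    · by_cases hiB : i ∈ B
      · refine ⟨1, fun u => ab (max (wB u i) (a i)), fun x => ?_⟩
        have h1 : g i x ≤ max (wB (x 1) i) (a i) := by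
          simp only [hg]
          rw [if_neg hiA, if_pos hiB]
          split
          · exact le_max_left _ _
          · exact le_max_right _ _
        exact lt_of_le_of_lt h1 (hab _)
      · refine ⟨0, fun _ => ab (max (b i) (a i)), fun x => ?_⟩
        have h1 : g i x ≤ max (b i) (a i) := by
          simp only [hg]
          rw [if_neg hiA, if_neg hiB]
          split
          · exact le_max_left _ _
          · exact le_max_right _ _
        exact lt_of_le_of_lt h1 (hab _)
  obtain ⟨k, F, hF⟩ := hpol g hgu
  -- key computations
  have key1 : ∀ s : X, s ≠ q → f (fun i => g i ![s, p]) = f (wA s) := by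
    intro s hs
    have e0 : (![s, p] : Fin 2 → X) 0 = s := rfl
    have e1 : (![s, p] : Fin 2 → X) 1 = p := rfl
    congr 1
    funext i
    simp only [hg, e0, e1]
    by_cases hiA : i ∈ A
    · rw [if_pos hiA, if_pos ⟨trivial, hs⟩]
    · rw [if_neg hiA]
      by_cases hiB : i ∈ B
      · rw [if_pos hiB, if_neg hs]
        exact (hwA1 s i hiA).symm
      · rw [if_neg hiB, if_neg hs]
        exact (hwA1 s i hiA).symm
  have key2 : ∀ t : X, f (fun i => g i ![q, t]) = f (wB t) := by
    intro t
    have e0 : (![q, t] : Fin 2 → X) 0 = q := rfl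
    have e1 : (![q, t] : Fin 2 → X) 1 = t := rfl
    congr 1
    funext i
    simp only [hg, e0, e1]
    by_cases hiA : i ∈ A
    · have hiB : i ∉ B := fun h => hAB i hiA h
      rw [if_pos hiA]
      split
      · next h => exact absurd rfl h.2
      · exact (hwB1 t i hiB).symm
    · rw [if_neg hiA]
      by_cases hiB : i ∈ B
      · rw [if_pos hiB, if_pos trivial]
      · rw [if_neg hiB, if_pos trivial]
        exact (hwB1 t i hiB).symm
  -- derive contradiction
  fin_cases k
  · -- bound depends on first coordinate; use the line x 0 = q
    have h1 : f (fun i => g i ![q, F q]) < F q := hF ![q, F q]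
    rw [key2 (F q)] at h1
    exact absurd h1 (not_lt_of_gt (hwB2 (F q)))
  · -- bound depends on second coordinate; use the line x 1 = p
    set s : X := ab (max (F p) q) with hs
    have hsq : s ≠ q := ne_of_gt (lt_of_le_of_lt (le_max_right _ _) (hab _))
    have hsFp : F p < s := lt_of_le_of_lt (le_max_left _ _) (hab _)
    have h1 : f (fun i => g i ![s, p]) < F p := hF ![s, p]
    rw [key1 s hsq] at h1
    exact absurd (lt_trans hsFp (lt_trans (hwA2 s) h1)) (lt_irrefl _)
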